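/- Let P_XY be a probability distribution on 𝒳×𝒴 with P_XY(x,y) > 0 for all (x,y), with 𝒳-marginal P_X, and let E0 > 0. Then the following Lagrange-duality identity holds: min over all joint probability distributions Q_XY on 𝒳×𝒴 whose 𝒳-marginal Q_X satisfies D(Q_X‖P_X) ≤ E0 of { D(Q_XY‖P_XY) + [ Σ_{x,y} Q_XY(x,y) ln(1/P_X(x)) − E0 − H_Q(X|Y) ]_+ } = sup over λ ∈ [0,1] and ρ ≥ 0 of [ inf over all joint probability distributions Q_XY on 𝒳×𝒴 of { D(Q_XY‖P_XY) + λ( Σ_{x,y} Q_XY(x,y) ln(1/P_X(x)) − E0 − H_Q(X|Y) ) + ρ( D(Q_X‖P_X) − E0 ) } ]. -/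

import Mathlib

open Finset

/-- A probability distribution on a finite set: nonnegative and summing to 1. -/
def IsProb {α : Type*} [Fintype α] (Q : α → ℝ) : Prop :=
  (∀ a, 0 ≤ Q a) ∧ ∑ a, Q a = 1

/-- Kullback–Leibler divergence `D(Q‖P) = Σ_a Q(a) ln(Q(a)/P(a))`
(with the convention `0 · ln(0/p) = 0`, automatic since `Real.log 0 = 0`
and the term is multiplied by `Q a = 0`). -/
noncomputable def KL {α : Type*} [Fintype α] (Q P : α → ℝ) : ℝ :=
  ∑ a, Q a * Real.log (Q a / P a)

/-- Shannon entropy `H_Q(X) = -Σ_x Q(x) ln Q(x)` (with `0 ln 0 = 0`). -/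
noncomputable def entropy {α : Type*} [Fintype α] (Q : α → ℝ) : ℝ :=
  -∑ a, Q a * Real.log (Q a)

/-- The 𝒳-marginal of a joint distribution on `𝒳 × 𝒴`. -/
noncomputable def margX {𝒳 𝒴 : Type*} [Fintype 𝒴] (Q : 𝒳 × 𝒴 → ℝ) : 𝒳 → ℝ :=
  fun x => ∑ y, Q (x, y)

/-- The 𝒴-marginal of a joint distribution on `𝒳 × 𝒴`. -/
noncomputable def margY {𝒳 𝒴 : Type*} [Fintype 𝒳] (Q : 𝒳 × 𝒴 → ℝ) : 𝒴 → ℝ :=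
  fun y => ∑ x, Q (x, y)

/-- Conditional entropy `H_Q(X|Y) = -Σ_{x,y} Q(x,y) ln(Q(x,y)/Q_Y(y))` (with `0 ln 0 = 0`). -/
noncomputable def condEnt {𝒳 𝒴 : Type*} [Fintype 𝒳] [Fintype 𝒴] (Q : 𝒳 × 𝒴 → ℝ) : ℝ :=
  -∑ x, ∑ y, Q (x, y) * Real.log (Q (x, y) / margY Q y)

lemma gibbs_pt (t s : ℝ) (ht : 0 ≤ t) (hs : 0 < s) : t - s ≤ t * Real.log (t / s) := by
  rcases eq_or_lt_of_le ht with h | h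
  · simp [← h]; linarith
  · have h1 : Real.log (s / t) ≤ s / t - 1 := Real.log_le_sub_one_of_pos (by positivity)
    have h2 : Real.log (t / s) = - Real.log (s / t) := by
      rw [← Real.log_inv]; congr 1; field_simp
    rw [h2]
    have h3 : t * (s / t) = s := by field_simp
    nlinarith

lemma logsum2 (a₁ b₁ a₂ b₂ : ℝ) (ha₁ : 0 ≤ a₁) (ha₂ : 0 ≤ a₂) (hb₁ : 0 ≤ b₁) (hb₂ : 0 ≤ b₂)
    (h₁ : a₁ = 0 ∨ 0 < b₁) (h₂ : a₂ = 0 ∨ 0 < b₂) :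
    (a₁ + a₂) * Real.log ((a₁ + a₂) / (b₁ + b₂)) ≤
      a₁ * Real.log (a₁ / b₁) + a₂ * Real.log (a₂ / b₂) := by
  have easy : ∀ a b b' : ℝ, 0 ≤ a → (a = 0 ∨ 0 < b) → 0 ≤ b' →
      a * Real.log (a / (b + b')) ≤ a * Real.log (a / b) := by
    intro a b b' ha hab hb'
    rcases eq_or_lt_of_le ha with h | h
    · rw [← h]; simp
    · have hb : 0 < b := hab.resolve_left (by linarith)
      apply mul_le_mul_of_nonneg_left _ ha
      apply Real.log_le_log (by positivity)
      gcongr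
      linarith
  rcases eq_or_lt_of_le ha₁ with h1 | h1
  · rw [← h1]
    have := easy a₂ b₂ b₁ ha₂ h₂ hb₁
    simp only [zero_add]
    rw [add_comm b₂ b₁] at this
    simpa using this
  rcases eq_or_lt_of_le ha₂ with h2 | h2
  · rw [← h2]
    have := easy a₁ b₁ b₂ ha₁ h₁ hb₂
    simpa using this
  · have hb1 : 0 < b₁ := h₁.resolve_left (by linarith)
    have hb2 : 0 < b₂ := h₂.resolve_left (by linarith)
    have hspos : 0 < a₁ + a₂ := by positivity
    have hbpos : 0 < b₁ + b₂ := by positivity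
    have g1 : a₁ - b₁ * (a₁ + a₂) / (b₁ + b₂) ≤
        a₁ * Real.log (a₁ / (b₁ * (a₁ + a₂) / (b₁ + b₂))) :=
      gibbs_pt _ _ ha₁ (by positivity)
    have g2 : a₂ - b₂ * (a₁ + a₂) / (b₁ + b₂) ≤
        a₂ * Real.log (a₂ / (b₂ * (a₁ + a₂) / (b₁ + b₂))) :=
      gibbs_pt _ _ ha₂ (by positivity)
    have e1 : Real.log (a₁ / (b₁ * (a₁ + a₂) / (b₁ + b₂))) =
        Real.log (a₁ / b₁) - Real.log ((a₁ + a₂) / (b₁ + b₂)) := by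
      rw [← Real.log_div (by positivity) (by positivity)]
      congr 1; field_simp
    have e2 : Real.log (a₂ / (b₂ * (a₁ + a₂) / (b₁ + b₂))) =
        Real.log (a₂ / b₂) - Real.log ((a₁ + a₂) / (b₁ + b₂)) := by
      rw [← Real.log_div (by positivity) (by positivity)]
      congr 1; field_simp
    rw [e1] at g1; rw [e2] at g2
    have hsum : b₁ * (a₁ + a₂) / (b₁ + b₂) + b₂ * (a₁ + a₂) / (b₁ + b₂) = a₁ + a₂ := by
      field_simp
    nlinarith [g1, g2]

section AuxMarg
variable {𝒳 𝒴 : Type*} [Fintype 𝒳] [Fintype 𝒴]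

lemma scale_ratio (a t s : ℝ) (ha : 0 ≤ a) :
    (a * t) * Real.log ((a * t) / (a * s)) = a * (t * Real.log (t / s)) := by
  rcases eq_or_lt_of_le ha with h | h
  · rw [← h]; simp
  · rw [mul_div_mul_left _ _ (ne_of_gt h)]; ring

lemma margX_nonneg (Q : 𝒳 × 𝒴 → ℝ) (hQ : ∀ p, 0 ≤ Q p) (x : 𝒳) : 0 ≤ margX Q x :=
  Finset.sum_nonneg fun _ _ => hQ _

lemma margY_nonneg (Q : 𝒳 × 𝒴 → ℝ) (hQ : ∀ p, 0 ≤ Q p) (y : 𝒴) : 0 ≤ margY Q y :=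
  Finset.sum_nonneg fun _ _ => hQ _

lemma sum_margX (Q : 𝒳 × 𝒴 → ℝ) : ∑ x, margX Q x = ∑ p, Q p := by
  rw [Fintype.sum_prod_type]; rfl

lemma margX_sum_one (Q : 𝒳 × 𝒴 → ℝ) (hQ : IsProb Q) : ∑ x, margX Q x = 1 := by
  rw [sum_margX]; exact hQ.2

lemma margX_pos (hP2 : ∀ p : 𝒳 × 𝒴, 0 < P p) [Nonempty 𝒴] (x : 𝒳) : 0 < margX P x :=
  Finset.sum_pos (fun y _ => hP2 (x, y)) Finset.univ_nonempty

lemma le_of_mem_nonneg_sum {Q : 𝒳 × 𝒴 → ℝ} (hQ : ∀ p, 0 ≤ Q p) (x : 𝒳) (y : 𝒴) :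
    Q (x, y) ≤ margY Q y :=
  Finset.single_le_sum (fun i _ => hQ (i, y)) (Finset.mem_univ x)

lemma margY_eq_zero_imp {Q : 𝒳 × 𝒴 → ℝ} (hQ : ∀ p, 0 ≤ Q p) {y : 𝒴}
    (h : margY Q y = 0) (x : 𝒳) : Q (x, y) = 0 :=
  le_antisymm (h ▸ le_of_mem_nonneg_sum hQ x y) (hQ _)

lemma margX_linear (a b : ℝ) (Q₁ Q₂ : 𝒳 × 𝒴 → ℝ) (x : 𝒳) :
    margX (fun p => a * Q₁ p + b * Q₂ p) x = a * margX Q₁ x + b * margX Q₂ x := by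
  simp [margX, Finset.mul_sum, Finset.sum_add_distrib]

lemma margY_linear (a b : ℝ) (Q₁ Q₂ : 𝒳 × 𝒴 → ℝ) (y : 𝒴) :
    margY (fun p => a * Q₁ p + b * Q₂ p) y = a * margY Q₁ y + b * margY Q₂ y := by
  simp [margY, Finset.mul_sum, Finset.sum_add_distrib]

lemma kl_ge_sub {α : Type*} [Fintype α] (Q R : α → ℝ) (hQ : ∀ a, 0 ≤ Q a)
    (hR : ∀ a, 0 < R a) : (∑ a, Q a) - (∑ a, R a) ≤ KL Q R := by
  rw [KL, ← Finset.sum_sub_distrib]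
  exact Finset.sum_le_sum fun a _ => gibbs_pt _ _ (hQ a) (hR a)

lemma kl_nonneg {α : Type*} [Fintype α] (Q R : α → ℝ) (hQ : ∀ a, 0 ≤ Q a)
    (hR : ∀ a, 0 < R a) (hQs : ∑ a, Q a = 1) (hRs : ∑ a, R a = 1) : 0 ≤ KL Q R := by
  have := kl_ge_sub Q R hQ hR
  rw [hQs, hRs] at this; linarith

lemma kl_self_zero {α : Type*} [Fintype α] (R : α → ℝ) (hR : ∀ a, 0 < R a) : KL R R = 0 := by
  rw [KL]
  apply Finset.sum_eq_zero
  intro a _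
  rw [div_self (ne_of_gt (hR a)), Real.log_one, mul_zero]

end AuxMarg

section Convexity
variable {𝒳 𝒴 : Type*} [Fintype 𝒳] [Fintype 𝒴]

lemma kl_convex {α : Type*} [Fintype α] (Q₁ Q₂ R : α → ℝ) (hQ₁ : ∀ p, 0 ≤ Q₁ p)
    (hQ₂ : ∀ p, 0 ≤ Q₂ p) (hR : ∀ p, 0 < R p) (a b : ℝ) (ha : 0 ≤ a) (hb : 0 ≤ b)
    (hab : a + b = 1) :
    KL (fun p => a * Q₁ p + b * Q₂ p) R ≤ a * KL Q₁ R + b * KL Q₂ R := by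
  rw [KL, KL, KL, Finset.mul_sum, Finset.mul_sum, ← Finset.sum_add_distrib]
  apply Finset.sum_le_sum
  intro p _
  have hRp : R p = a * R p + b * R p := by rw [← add_mul, hab, one_mul]
  calc (a * Q₁ p + b * Q₂ p) * Real.log ((a * Q₁ p + b * Q₂ p) / R p)
      = (a * Q₁ p + b * Q₂ p) * Real.log ((a * Q₁ p + b * Q₂ p) / (a * R p + b * R p)) := by
        rw [← hRp]
    _ ≤ (a * Q₁ p) * Real.log ((a * Q₁ p) / (a * R p)) +
        (b * Q₂ p) * Real.log ((b * Q₂ p) / (b * R p)) := by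
        apply logsum2 _ _ _ _ (mul_nonneg ha (hQ₁ p)) (mul_nonneg hb (hQ₂ p))
          (mul_nonneg ha (hR p).le) (mul_nonneg hb (hR p).le)
        · rcases eq_or_lt_of_le ha with h | h
          · exact Or.inl (by rw [← h, zero_mul])
          · exact Or.inr (mul_pos h (hR p))
        · rcases eq_or_lt_of_le hb with h | h
          · exact Or.inl (by rw [← h, zero_mul])
          · exact Or.inr (mul_pos h (hR p))
    _ = a * (Q₁ p * Real.log (Q₁ p / R p)) + b * (Q₂ p * Real.log (Q₂ p / R p)) := by
        rw [scale_ratio _ _ _ ha, scale_ratio _ _ _ hb]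

lemma klmarg_convex [Nonempty 𝒴] (Q₁ Q₂ P : 𝒳 × 𝒴 → ℝ) (hQ₁ : ∀ p, 0 ≤ Q₁ p)
    (hQ₂ : ∀ p, 0 ≤ Q₂ p) (hP2 : ∀ p, 0 < P p) (a b : ℝ) (ha : 0 ≤ a) (hb : 0 ≤ b)
    (hab : a + b = 1) :
    KL (margX (fun p => a * Q₁ p + b * Q₂ p)) (margX P) ≤
      a * KL (margX Q₁) (margX P) + b * KL (margX Q₂) (margX P) := by
  have h : margX (fun p => a * Q₁ p + b * Q₂ p) =
      fun x => a * margX Q₁ x + b * margX Q₂ x := funext (margX_linear a b Q₁ Q₂)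
  rw [h]
  exact kl_convex _ _ _ (fun x => margX_nonneg Q₁ hQ₁ x) (fun x => margX_nonneg Q₂ hQ₂ x)
    (fun x => margX_pos hP2 x) a b ha hb hab

lemma negcond_convex (Q₁ Q₂ : 𝒳 × 𝒴 → ℝ) (hQ₁ : ∀ p, 0 ≤ Q₁ p)
    (hQ₂ : ∀ p, 0 ≤ Q₂ p) (a b : ℝ) (ha : 0 ≤ a) (hb : 0 ≤ b) (hab : a + b = 1) :
    -condEnt (fun p => a * Q₁ p + b * Q₂ p) ≤ a * -condEnt Q₁ + b * -condEnt Q₂ := by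
  simp only [condEnt, neg_neg]
  rw [Finset.mul_sum, Finset.mul_sum, ← Finset.sum_add_distrib]
  apply Finset.sum_le_sum
  intro x _
  rw [Finset.mul_sum, Finset.mul_sum, ← Finset.sum_add_distrib]
  apply Finset.sum_le_sum
  intro y _
  have hm : margY (fun p => a * Q₁ p + b * Q₂ p) y = a * margY Q₁ y + b * margY Q₂ y :=
    margY_linear a b Q₁ Q₂ y
  have side : ∀ (c : ℝ) (Q : 𝒳 × 𝒴 → ℝ), 0 ≤ c → (∀ p, 0 ≤ Q p) →
      (c * Q (x, y) = 0 ∨ 0 < c * margY Q y) := by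
    intro c Q hc hQ
    rcases eq_or_lt_of_le hc with h | h
    · exact Or.inl (by rw [← h, zero_mul])
    rcases eq_or_lt_of_le (margY_nonneg Q hQ y) with h2 | h2
    · exact Or.inl (by rw [margY_eq_zero_imp hQ h2.symm x, mul_zero])
    · exact Or.inr (mul_pos h h2)
  calc (a * Q₁ (x, y) + b * Q₂ (x, y)) *
        Real.log ((a * Q₁ (x, y) + b * Q₂ (x, y)) / margY (fun p => a * Q₁ p + b * Q₂ p) y)
      = (a * Q₁ (x, y) + b * Q₂ (x, y)) *
        Real.log ((a * Q₁ (x, y) + b * Q₂ (x, y)) / (a * margY Q₁ y + b * margY Q₂ y)) := by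
        rw [hm]
    _ ≤ (a * Q₁ (x, y)) * Real.log ((a * Q₁ (x, y)) / (a * margY Q₁ y)) +
        (b * Q₂ (x, y)) * Real.log ((b * Q₂ (x, y)) / (b * margY Q₂ y)) := by
        apply logsum2 _ _ _ _ (mul_nonneg ha (hQ₁ (x, y))) (mul_nonneg hb (hQ₂ (x, y)))
          (mul_nonneg ha (margY_nonneg Q₁ hQ₁ y)) (mul_nonneg hb (margY_nonneg Q₂ hQ₂ y))
          (side a Q₁ ha hQ₁) (side b Q₂ hb hQ₂)
    _ = a * (Q₁ (x, y) * Real.log (Q₁ (x, y) / margY Q₁ y)) +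
        b * (Q₂ (x, y) * Real.log (Q₂ (x, y) / margY Q₂ y)) := by
        rw [scale_ratio _ _ _ ha, scale_ratio _ _ _ hb]

end Convexity

section MoreAux
variable {𝒳 𝒴 : Type*} [Fintype 𝒳] [Fintype 𝒴]

/-- The linear part `Σ Q ln(1/P_X)`. -/
noncomputable def Sfun (P Q : 𝒳 × 𝒴 → ℝ) : ℝ :=
  ∑ x, ∑ y, Q (x, y) * Real.log (1 / margX P x)

noncomputable def Gfun (P : 𝒳 × 𝒴 → ℝ) (E0 : ℝ) (Q : 𝒳 × 𝒴 → ℝ) : ℝ :=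
  Sfun P Q - E0 - condEnt Q

noncomputable def Hfun (P : 𝒳 × 𝒴 → ℝ) (E0 : ℝ) (Q : 𝒳 × 𝒴 → ℝ) : ℝ :=
  KL (margX Q) (margX P) - E0

lemma Sfun_linear (P Q₁ Q₂ : 𝒳 × 𝒴 → ℝ) (a b : ℝ) :
    Sfun P (fun p => a * Q₁ p + b * Q₂ p) = a * Sfun P Q₁ + b * Sfun P Q₂ := by
  simp only [Sfun, Finset.mul_sum, ← Finset.sum_add_distrib]
  refine Finset.sum_congr rfl fun x _ => Finset.sum_congr rfl fun y _ => by ring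

lemma Sfun_nonneg [Nonempty 𝒴] (P Q : 𝒳 × 𝒴 → ℝ) (hP : IsProb P) (hPpos : ∀ p, 0 < P p)
    (hQ : ∀ p, 0 ≤ Q p) : 0 ≤ Sfun P Q := by
  apply Finset.sum_nonneg; intro x _
  apply Finset.sum_nonneg; intro y _
  apply mul_nonneg (hQ _)
  apply Real.log_nonneg
  rw [le_div_iff₀ (margX_pos hPpos x), one_mul]
  calc margX P x ≤ ∑ x', margX P x' :=
        Finset.single_le_sum (fun i _ => margX_nonneg P hP.1 i) (Finset.mem_univ x)
    _ = 1 := margX_sum_one P hP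

lemma sum_margY_one (Q : 𝒳 × 𝒴 → ℝ) (hQ : IsProb Q) : ∑ y, margY Q y = 1 := by
  rw [← hQ.2, Fintype.sum_prod_type, Finset.sum_comm]; rfl

lemma negcond_ge (Q : 𝒳 × 𝒴 → ℝ) (hQ : IsProb Q) :
    1 - (Fintype.card 𝒳 : ℝ) ≤ -condEnt Q := by
  have key : ∀ x y, Q (x, y) - margY Q y ≤ Q (x, y) * Real.log (Q (x, y) / margY Q y) := by
    intro x y
    rcases eq_or_lt_of_le (margY_nonneg Q hQ.1 y) with h | h
    · rw [margY_eq_zero_imp hQ.1 h.symm x, ← h]; simp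
    · exact gibbs_pt _ _ (hQ.1 _) h
  have h1 : ∑ x, ∑ y, (Q (x, y) - margY Q y) ≤ ∑ x : 𝒳, ∑ y, Q (x, y) * Real.log (Q (x, y) / margY Q y) :=
    Finset.sum_le_sum fun x _ => Finset.sum_le_sum fun y _ => key x y
  have h2 : ∑ x : 𝒳, ∑ y, (Q (x, y) - margY Q y) = 1 - (Fintype.card 𝒳 : ℝ) := by
    simp only [Finset.sum_sub_distrib]
    have ha : ∑ x : 𝒳, ∑ y, Q (x, y) = 1 := by
      rw [← Fintype.sum_prod_type]; exact hQ.2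
    have hb : ∑ _x : 𝒳, ∑ y, margY Q y = (Fintype.card 𝒳 : ℝ) := by
      rw [sum_margY_one Q hQ]; simp
    rw [ha, hb]
  rw [condEnt, neg_neg]
  calc 1 - (Fintype.card 𝒳 : ℝ) = ∑ x : 𝒳, ∑ y, (Q (x, y) - margY Q y) := h2.symm
    _ ≤ _ := h1

lemma Gfun_lb (P : 𝒳 × 𝒴 → ℝ) [Nonempty 𝒴] (E0 : ℝ) (Q : 𝒳 × 𝒴 → ℝ) (hP : IsProb P)
    (hPpos : ∀ p, 0 < P p) (hQ : IsProb Q) :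
    1 - (Fintype.card 𝒳 : ℝ) - E0 ≤ Gfun P E0 Q := by
  have := Sfun_nonneg P Q hP hPpos hQ.1
  have := negcond_ge Q hQ
  rw [Gfun]; linarith

lemma Hfun_lb (P : 𝒳 × 𝒴 → ℝ) [Nonempty 𝒴] (E0 : ℝ) (Q : 𝒳 × 𝒴 → ℝ) (hP : IsProb P)
    (hPpos : ∀ p, 0 < P p) (hQ : IsProb Q) : -E0 ≤ Hfun P E0 Q := by
  have h0 : 0 ≤ KL (margX Q) (margX P) :=
    kl_nonneg _ _ (margX_nonneg Q hQ.1) (margX_pos hPpos) (margX_sum_one Q hQ)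
      (margX_sum_one P hP)
  rw [Hfun]; linarith

lemma Gfun_convex (P : 𝒳 × 𝒴 → ℝ) (E0 : ℝ) (Q₁ Q₂ : 𝒳 × 𝒴 → ℝ) (hQ₁ : ∀ p, 0 ≤ Q₁ p)
    (hQ₂ : ∀ p, 0 ≤ Q₂ p) (a b : ℝ) (ha : 0 ≤ a) (hb : 0 ≤ b) (hab : a + b = 1) :
    Gfun P E0 (fun p => a * Q₁ p + b * Q₂ p) ≤ a * Gfun P E0 Q₁ + b * Gfun P E0 Q₂ := by
  have h1 := Sfun_linear P Q₁ Q₂ a b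
  have h2 := negcond_convex Q₁ Q₂ hQ₁ hQ₂ a b ha hb hab
  have hE : a * E0 + b * E0 = E0 := by rw [← add_mul, hab, one_mul]
  simp only [Gfun]
  linarith

lemma Hfun_convex [Nonempty 𝒴] (P : 𝒳 × 𝒴 → ℝ) (E0 : ℝ) (Q₁ Q₂ : 𝒳 × 𝒴 → ℝ)
    (hQ₁ : ∀ p, 0 ≤ Q₁ p) (hQ₂ : ∀ p, 0 ≤ Q₂ p) (hPpos : ∀ p, 0 < P p)
    (a b : ℝ) (ha : 0 ≤ a) (hb : 0 ≤ b) (hab : a + b = 1) :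
    Hfun P E0 (fun p => a * Q₁ p + b * Q₂ p) ≤ a * Hfun P E0 Q₁ + b * Hfun P E0 Q₂ := by
  have := klmarg_convex Q₁ Q₂ P hQ₁ hQ₂ hPpos a b ha hb hab
  have hE : a * E0 + b * E0 = E0 := by rw [← add_mul, hab, one_mul]
  simp only [Hfun]; linarith

end MoreAux

section SepHelpers

lemma coef_nonpos {x u d : ℝ} (h : ∀ M : ℝ, 0 ≤ M → x + M * d < u) : d ≤ 0 := by
  by_contra hd
  push_neg at hd
  have h0 : x < u := by simpa using h 0 le_rfl
  have h0' : 0 ≤ (u - x) / d := div_nonneg (by linarith) hd.le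
  have hM := h ((u - x) / d) h0'
  rw [div_mul_cancel₀ _ (ne_of_gt hd)] at hM
  linarith

lemma coef_zero {x u d : ℝ} (h : ∀ t : ℝ, u ≤ x + t * d) : d = 0 := by
  by_contra hd
  have hM := h ((u - x - 1) / d)
  rw [div_mul_cancel₀ _ hd] at hM
  linarith

lemma eps_limit {A u K : ℝ} (hK : 0 ≤ K) (h : ∀ ε : ℝ, 0 < ε → A - ε * K < u) : A ≤ u := by
  by_contra hc
  push_neg at hc
  have hε : 0 < (A - u) / (K + 1) := div_pos (by linarith) (by linarith)
  have := h _ hε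
  have h2 : (A - u) / (K + 1) * K ≤ (A - u) := by
    rw [div_mul_eq_mul_div, div_le_iff₀ (by linarith)]
    nlinarith
  linarith

lemma combo_lt {a b x y c : ℝ} (ha : 0 ≤ a) (hb : 0 ≤ b) (hab : a + b = 1)
    (hx : x < c) (hy : y < c) : a * x + b * y < c := by
  rcases eq_or_lt_of_le ha with h | h
  · rw [← h] at hab ⊢; simp at hab; rw [hab]; simpa
  · have h1 : a * x < a * c := mul_lt_mul_of_pos_left hx h
    have h2 : b * y ≤ b * c := mul_le_mul_of_nonneg_left hy.le hb
    have hc : a * c + b * c = c := by rw [← add_mul, hab, one_mul]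
    linarith

lemma frep (f : (ℝ × ℝ × ℝ × ℝ) →L[ℝ] ℝ) (a b c d : ℝ) :
    f (a, b, c, d) = a * f (1, 0, 0, 0) + b * f (0, 1, 0, 0) + c * f (0, 0, 1, 0) +
      d * f (0, 0, 0, 1) := by
  have h : (a, b, c, d) = a • ((1 : ℝ), (0 : ℝ), (0 : ℝ), (0 : ℝ)) + b • (0, 1, 0, 0) +
      c • (0, 0, 1, 0) + d • (0, 0, 0, 1) := by
    simp [Prod.ext_iff]
  rw [h, map_add, map_add, map_add, map_smul, map_smul, map_smul, map_smul]
  simp [smul_eq_mul]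

end SepHelpers

set_option maxHeartbeats 1000000 in
/-- Lagrange duality step in the proof of Theorem 1. -/
theorem stmt_13 {𝒳 𝒴 : Type*} [Fintype 𝒳] [Nonempty 𝒳] [Fintype 𝒴] [Nonempty 𝒴]
    (P : 𝒳 × 𝒴 → ℝ) (hP : IsProb P) (hPpos : ∀ p, 0 < P p)
    (E0 : ℝ) (hE0 : 0 < E0) :
    sInf {v | ∃ Q : 𝒳 × 𝒴 → ℝ, IsProb Q ∧ KL (margX Q) (margX P) ≤ E0 ∧
        v = KL Q P +
          max ((∑ x, ∑ y, Q (x, y) * Real.log (1 / margX P x)) - E0 - condEnt Q) 0}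
      = sSup {v | ∃ l r : ℝ, 0 ≤ l ∧ l ≤ 1 ∧ 0 ≤ r ∧
          v = sInf {u | ∃ Q : 𝒳 × 𝒴 → ℝ, IsProb Q ∧
              u = KL Q P +
                l * ((∑ x, ∑ y, Q (x, y) * Real.log (1 / margX P x)) - E0 - condEnt Q) +
                r * (KL (margX Q) (margX P) - E0)}} := by
  -- Rewrite the sets using `Gfun` / `Hfun`.
  have hsetT : {v | ∃ Q : 𝒳 × 𝒴 → ℝ, IsProb Q ∧ KL (margX Q) (margX P) ≤ E0 ∧
        v = KL Q P +
          max ((∑ x, ∑ y, Q (x, y) * Real.log (1 / margX P x)) - E0 - condEnt Q) 0}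
      = {v | ∃ Q : 𝒳 × 𝒴 → ℝ, IsProb Q ∧ Hfun P E0 Q ≤ 0 ∧
        v = KL Q P + max (Gfun P E0 Q) 0} := by
    ext v
    constructor
    · rintro ⟨Q, hQ, h1, h2⟩
      exact ⟨Q, hQ, by rw [Hfun]; linarith, h2⟩
    · rintro ⟨Q, hQ, h1, h2⟩
      refine ⟨Q, hQ, ?_, h2⟩
      rw [Hfun] at h1; linarith
  have hsetS : {v | ∃ l r : ℝ, 0 ≤ l ∧ l ≤ 1 ∧ 0 ≤ r ∧
          v = sInf {u | ∃ Q : 𝒳 × 𝒴 → ℝ, IsProb Q ∧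
              u = KL Q P +
                l * ((∑ x, ∑ y, Q (x, y) * Real.log (1 / margX P x)) - E0 - condEnt Q) +
                r * (KL (margX Q) (margX P) - E0)}}
      = {v | ∃ l r : ℝ, 0 ≤ l ∧ l ≤ 1 ∧ 0 ≤ r ∧
          v = sInf {u | ∃ Q : 𝒳 × 𝒴 → ℝ, IsProb Q ∧
              u = KL Q P + l * Gfun P E0 Q + r * Hfun P E0 Q}} := rfl
  rw [hsetT, hsetS]
  set T : Set ℝ := {v | ∃ Q : 𝒳 × 𝒴 → ℝ, IsProb Q ∧ Hfun P E0 Q ≤ 0 ∧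
        v = KL Q P + max (Gfun P E0 Q) 0} with hTdef
  set Sv : Set ℝ := {v | ∃ l r : ℝ, 0 ≤ l ∧ l ≤ 1 ∧ 0 ≤ r ∧
          v = sInf {u | ∃ Q : 𝒳 × 𝒴 → ℝ, IsProb Q ∧
              u = KL Q P + l * Gfun P E0 Q + r * Hfun P E0 Q}} with hSvdef
  have hPprob : IsProb P := hP
  -- basic facts
  have hKLpos : ∀ Q : 𝒳 × 𝒴 → ℝ, IsProb Q → 0 ≤ KL Q P := fun Q hQ =>
    kl_nonneg Q P hQ.1 hPpos hQ.2 hP.2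
  have hmargself : KL (margX P) (margX P) = 0 := kl_self_zero _ (margX_pos hPpos)
  have hHP : Hfun P E0 P = -E0 := by rw [Hfun, hmargself]; ring
  have hcard1 : (1 : ℝ) ≤ (Fintype.card 𝒳 : ℝ) := by
    exact_mod_cast Fintype.card_pos
  have hG0 : (1 : ℝ) - (Fintype.card 𝒳 : ℝ) - E0 ≤ 0 := by linarith
  have hTmemP : KL P P + max (Gfun P E0 P) 0 ∈ T := ⟨P, hPprob, by rw [hHP]; linarith, rfl⟩
  have hTne : T.Nonempty := ⟨_, hTmemP⟩
  have hTbdd : BddBelow T := by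
    refine ⟨0, ?_⟩
    rintro v ⟨Q, hQ, _, rfl⟩
    exact add_nonneg (hKLpos Q hQ) (le_max_right _ _)
  have hmle : ∀ w ∈ T, sInf T ≤ w := fun w hw => csInf_le hTbdd hw
  -- weak duality: every element of Sv is ≤ sInf T
  have hub : ∀ v ∈ Sv, v ≤ sInf T := by
    rintro v ⟨l, r, hl0, hl1, hr0, rfl⟩
    apply le_csInf hTne
    rintro w ⟨Q, hQ, hfeas, rfl⟩
    have hUbdd : BddBelow {u | ∃ Q : 𝒳 × 𝒴 → ℝ, IsProb Q ∧
        u = KL Q P + l * Gfun P E0 Q + r * Hfun P E0 Q} := by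
      refine ⟨(1 - (Fintype.card 𝒳 : ℝ) - E0) - r * E0, ?_⟩
      rintro u ⟨Q', hQ', rfl⟩
      have h1 : 0 ≤ KL Q' P := hKLpos Q' hQ'
      have h2 : 1 - (Fintype.card 𝒳 : ℝ) - E0 ≤ Gfun P E0 Q' := Gfun_lb P E0 Q' hP hPpos hQ'
      have h3 : l * (1 - (Fintype.card 𝒳 : ℝ) - E0) ≤ l * Gfun P E0 Q' :=
        mul_le_mul_of_nonneg_left h2 hl0
      have h4 : 1 - (Fintype.card 𝒳 : ℝ) - E0 ≤ l * (1 - (Fintype.card 𝒳 : ℝ) - E0) := by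
        nlinarith
      have h5 : -E0 ≤ Hfun P E0 Q' := Hfun_lb P E0 Q' hP hPpos hQ'
      have h6 : r * (-E0) ≤ r * Hfun P E0 Q' := mul_le_mul_of_nonneg_left h5 hr0
      nlinarith
    have hmem : KL Q P + l * Gfun P E0 Q + r * Hfun P E0 Q ∈ {u | ∃ Q : 𝒳 × 𝒴 → ℝ, IsProb Q ∧
        u = KL Q P + l * Gfun P E0 Q + r * Hfun P E0 Q} := ⟨Q, hQ, rfl⟩
    refine le_trans (csInf_le hUbdd hmem) ?_
    have hlG : l * Gfun P E0 Q ≤ max (Gfun P E0 Q) 0 := by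
      rcases le_or_gt 0 (Gfun P E0 Q) with h | h
      · calc l * Gfun P E0 Q ≤ 1 * Gfun P E0 Q := mul_le_mul_of_nonneg_right hl1 h
          _ = Gfun P E0 Q := one_mul _
          _ ≤ _ := le_max_left _ _
      · calc l * Gfun P E0 Q ≤ 0 := mul_nonpos_of_nonneg_of_nonpos hl0 h.le
          _ ≤ _ := le_max_right _ _
    have hrH : r * Hfun P E0 Q ≤ 0 := mul_nonpos_of_nonneg_of_nonpos hr0 hfeas
    linarith
  -- strong duality
  set A : Set (ℝ × ℝ × ℝ × ℝ) := {p | ∃ Q : 𝒳 × 𝒴 → ℝ, ∃ t : ℝ, IsProb Q ∧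
      Gfun P E0 Q - t ≤ p.1 ∧ -t ≤ p.2.1 ∧ Hfun P E0 Q ≤ p.2.2.1 ∧
      KL Q P + t ≤ p.2.2.2} with hAdef
  set B : Set (ℝ × ℝ × ℝ × ℝ) := {p | p.1 < 0 ∧ p.2.1 < 0 ∧ p.2.2.1 < 0 ∧
      p.2.2.2 < sInf T} with hBdef
  have hBopen : IsOpen B := by
    have hB2 : B = {p : ℝ × ℝ × ℝ × ℝ | p.1 < 0} ∩ ({p | p.2.1 < 0} ∩
        ({p | p.2.2.1 < 0} ∩ {p | p.2.2.2 < sInf T})) := by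
      ext p; simp only [hBdef, Set.mem_setOf_eq, Set.mem_inter_iff, and_assoc]
    rw [hB2]
    exact (isOpen_lt (by fun_prop) continuous_const).inter
      ((isOpen_lt (by fun_prop) continuous_const).inter
        ((isOpen_lt (by fun_prop) continuous_const).inter
          (isOpen_lt (by fun_prop) continuous_const)))
  have hBconv : Convex ℝ B := by
    rintro p ⟨hp1, hp2, hp3, hp4⟩ q ⟨hq1, hq2, hq3, hq4⟩ a b ha hb hab
    refine ⟨?_, ?_, ?_, ?_⟩ <;>
      simp only [Prod.fst_add, Prod.snd_add, Prod.smul_fst, Prod.smul_snd, smul_eq_mul]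
    exacts [combo_lt ha hb hab hp1 hq1, combo_lt ha hb hab hp2 hq2,
      combo_lt ha hb hab hp3 hq3, combo_lt ha hb hab hp4 hq4]
  have hAconv : Convex ℝ A := by
    rintro p ⟨Q₁, t₁, hQ₁, h11, h12, h13, h14⟩ q ⟨Q₂, t₂, hQ₂, h21, h22, h23, h24⟩
      a b ha hb hab
    refine ⟨fun p' => a * Q₁ p' + b * Q₂ p', a * t₁ + b * t₂,
      ⟨fun p' => add_nonneg (mul_nonneg ha (hQ₁.1 _)) (mul_nonneg hb (hQ₂.1 _)), ?_⟩,
      ?_, ?_, ?_, ?_⟩ <;>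
      simp only [Prod.fst_add, Prod.snd_add, Prod.smul_fst, Prod.smul_snd, smul_eq_mul]
    · rw [Finset.sum_add_distrib, ← Finset.mul_sum, ← Finset.mul_sum, hQ₁.2, hQ₂.2]
      linarith
    · have hc := Gfun_convex P E0 Q₁ Q₂ hQ₁.1 hQ₂.1 a b ha hb hab
      have e1 : a * (Gfun P E0 Q₁ - t₁) ≤ a * p.1 := mul_le_mul_of_nonneg_left h11 ha
      have e2 : b * (Gfun P E0 Q₂ - t₂) ≤ b * q.1 := mul_le_mul_of_nonneg_left h21 hb
      nlinarith
    · have e1 : a * (-t₁) ≤ a * p.2.1 := mul_le_mul_of_nonneg_left h12 ha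
      have e2 : b * (-t₂) ≤ b * q.2.1 := mul_le_mul_of_nonneg_left h22 hb
      nlinarith
    · have hc := Hfun_convex P E0 Q₁ Q₂ hQ₁.1 hQ₂.1 hPpos a b ha hb hab
      have e1 : a * Hfun P E0 Q₁ ≤ a * p.2.2.1 := mul_le_mul_of_nonneg_left h13 ha
      have e2 : b * Hfun P E0 Q₂ ≤ b * q.2.2.1 := mul_le_mul_of_nonneg_left h23 hb
      linarith
    · have hc := kl_convex Q₁ Q₂ P hQ₁.1 hQ₂.1 hPpos a b ha hb hab
      have e1 : a * (KL Q₁ P + t₁) ≤ a * p.2.2.2 := mul_le_mul_of_nonneg_left h14 ha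
      have e2 : b * (KL Q₂ P + t₂) ≤ b * q.2.2.2 := mul_le_mul_of_nonneg_left h24 hb
      nlinarith
  have hdisj : Disjoint B A := by
    rw [Set.disjoint_left]
    rintro p ⟨hb1, hb2, hb3, hb4⟩ ⟨Q, t, hQ, ha1, ha2, ha3, ha4⟩
    have hfeas : Hfun P E0 Q ≤ 0 := by linarith
    have h1 := hmle _ ⟨Q, hQ, hfeas, rfl⟩
    have hGt : Gfun P E0 Q ≤ t := by linarith
    have ht0 : 0 ≤ t := by linarith
    have hmax : max (Gfun P E0 Q) 0 ≤ t := max_le hGt ht0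
    linarith
  obtain ⟨f, u, hfB, hfA⟩ := geometric_hahn_banach_open hBconv hBopen hAconv hdisj
  set c₁ := f (1, 0, 0, 0) with hc₁def
  set c₂ := f (0, 1, 0, 0) with hc₂def
  set c₃ := f (0, 0, 1, 0) with hc₃def
  set c₄ := f (0, 0, 0, 1) with hc₄def
  have hA' : ∀ (Q : 𝒳 × 𝒴 → ℝ) (t : ℝ), IsProb Q →
      u ≤ (Gfun P E0 Q - t) * c₁ + (-t) * c₂ + Hfun P E0 Q * c₃ + (KL Q P + t) * c₄ := by
    intro Q t hQ
    have hm : ((Gfun P E0 Q - t, -t, Hfun P E0 Q, KL Q P + t) : ℝ × ℝ × ℝ × ℝ) ∈ A :=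
      ⟨Q, t, hQ, le_rfl, le_rfl, le_rfl, le_rfl⟩
    have := hfA _ hm
    rwa [frep] at this
  have hB' : ∀ p1 p2 p3 p4 : ℝ, p1 < 0 → p2 < 0 → p3 < 0 → p4 < sInf T →
      p1 * c₁ + p2 * c₂ + p3 * c₃ + p4 * c₄ < u := by
    intro p1 p2 p3 p4 h1 h2 h3 h4
    have := hfB (p1, p2, p3, p4) ⟨h1, h2, h3, h4⟩
    rwa [frep] at this
  have hc1 : 0 ≤ c₁ := by
    have h := coef_nonpos (x := -c₁ - c₂ - c₃ + (sInf T - 1) * c₄) (u := u) (d := -c₁)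
      (fun M hM => by
        have := hB' (-1 - M) (-1) (-1) (sInf T - 1) (by linarith) (by linarith)
          (by linarith) (by linarith)
        linarith)
    linarith
  have hc2 : 0 ≤ c₂ := by
    have h := coef_nonpos (x := -c₁ - c₂ - c₃ + (sInf T - 1) * c₄) (u := u) (d := -c₂)
      (fun M hM => by
        have := hB' (-1) (-1 - M) (-1) (sInf T - 1) (by linarith) (by linarith)
          (by linarith) (by linarith)
        linarith)
    linarith
  have hc3 : 0 ≤ c₃ := by
    have h := coef_nonpos (x := -c₁ - c₂ - c₃ + (sInf T - 1) * c₄) (u := u) (d := -c₃)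
      (fun M hM => by
        have := hB' (-1) (-1) (-1 - M) (sInf T - 1) (by linarith) (by linarith)
          (by linarith) (by linarith)
        linarith)
    linarith
  have hc4 : 0 ≤ c₄ := by
    have h := coef_nonpos (x := -c₁ - c₂ - c₃ + (sInf T - 1) * c₄) (u := u) (d := -c₄)
      (fun M hM => by
        have := hB' (-1) (-1) (-1) (sInf T - 1 - M) (by linarith) (by linarith)
          (by linarith) (by linarith)
        linarith)
    linarith
  have hc4m : sInf T * c₄ ≤ u := by
    apply eps_limit (K := c₁ + c₂ + c₃ + c₄) (by linarith)
    intro ε hε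
    have := hB' (-ε) (-ε) (-ε) (sInf T - ε) (by linarith) (by linarith) (by linarith)
      (by linarith)
    linarith
  set t₀ := |Gfun P E0 P| + 1 with ht₀def
  have ht₀1 : 1 ≤ t₀ := by
    have := abs_nonneg (Gfun P E0 P); linarith
  have hGPt : Gfun P E0 P - t₀ ≤ -1 := by
    have := le_abs_self (Gfun P E0 P); linarith
  have hc4pos : 0 < c₄ := by
    rcases eq_or_lt_of_le hc4 with h | h
    · exfalso
      have hS := hA' P t₀ hPprob
      rw [← h, mul_zero, add_zero, hHP] at hS
      have hu0 : 0 ≤ u := by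
        have h0 : sInf T * c₄ = 0 := by rw [← h, mul_zero]
        linarith
      have e1 : (Gfun P E0 P - t₀) * c₁ ≤ (-1) * c₁ := mul_le_mul_of_nonneg_right hGPt hc1
      have e2 : (-t₀) * c₂ ≤ (-1) * c₂ := mul_le_mul_of_nonneg_right (by linarith) hc2
      have e3 : 0 ≤ c₃ * E0 := mul_nonneg hc3 hE0.le
      have hc1z : c₁ = 0 := by nlinarith
      have hc2z : c₂ = 0 := by nlinarith
      have hc3E : c₃ * E0 = 0 := by nlinarith
      have hc3z : c₃ = 0 := by
        rcases mul_eq_zero.mp hc3E with h' | h'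
        · exact h'
        · exact absurd h' (ne_of_gt hE0)
      have hcontra := hB' (-1) (-1) (-1) (sInf T - 1) (by linarith) (by linarith)
        (by linarith) (by linarith)
      rw [hc1z, hc2z, hc3z, ← h] at hcontra
      simp at hcontra
      linarith
    · exact h
  have hsum : c₁ + c₂ = c₄ := by
    have hz : ∀ t : ℝ, u ≤ (Gfun P E0 P * c₁ + Hfun P E0 P * c₃ + KL P P * c₄) +
        t * (c₄ - c₁ - c₂) := by
      intro t
      have := hA' P t hPprob
      nlinarith
    have := coef_zero hz
    linarith
  set l := c₁ / c₄ with hldef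
  set r := c₃ / c₄ with hrdef
  have hl0 : 0 ≤ l := div_nonneg hc1 hc4pos.le
  have hl1 : l ≤ 1 := (div_le_one hc4pos).mpr (by linarith)
  have hr0 : 0 ≤ r := div_nonneg hc3 hc4pos.le
  have hfinal : ∀ Q : 𝒳 × 𝒴 → ℝ, IsProb Q →
      sInf T ≤ KL Q P + l * Gfun P E0 Q + r * Hfun P E0 Q := by
    intro Q hQ
    have h0 := hA' Q 0 hQ
    have key : c₄ * (KL Q P + l * Gfun P E0 Q + r * Hfun P E0 Q) =
        Gfun P E0 Q * c₁ + Hfun P E0 Q * c₃ + KL Q P * c₄ := by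
      rw [hldef, hrdef]
      field_simp
      ring
    have hmul : c₄ * sInf T ≤ c₄ * (KL Q P + l * Gfun P E0 Q + r * Hfun P E0 Q) := by
      rw [key]; nlinarith
    exact le_of_mul_le_mul_left hmul hc4pos
  -- conclude
  have hUne : ({u | ∃ Q : 𝒳 × 𝒴 → ℝ, IsProb Q ∧
      u = KL Q P + l * Gfun P E0 Q + r * Hfun P E0 Q} : Set ℝ).Nonempty :=
    ⟨_, P, hPprob, rfl⟩
  have hUge : sInf T ≤ sInf {u | ∃ Q : 𝒳 × 𝒴 → ℝ, IsProb Q ∧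
      u = KL Q P + l * Gfun P E0 Q + r * Hfun P E0 Q} := by
    apply le_csInf hUne
    rintro b ⟨Q, hQ, rfl⟩
    exact hfinal Q hQ
  have hmemS : sInf {u | ∃ Q : 𝒳 × 𝒴 → ℝ, IsProb Q ∧
      u = KL Q P + l * Gfun P E0 Q + r * Hfun P E0 Q} ∈ Sv :=
    ⟨l, r, hl0, hl1, hr0, rfl⟩
  have hSbdd : BddAbove Sv := ⟨sInf T, fun v hv => hub v hv⟩
  exact le_antisymm (le_trans hUge (le_csSup hSbdd hmemS)) (csSup_le ⟨_, hmemS⟩ hub)
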